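/- (Corollary 2) For every k ∈ ℕ and every n ∈ ℤ, f(n−k, x, q^k·s) = (f(k−1, x, q·s)·f(n, x, s) − f(k, x, s)·f(n−1, x, q·s)) / v(k), where v(k) = (−1)^k · q^{binom(k,2)} · s^{k−1}. -/

import Mathlib

open Finset

variable {K : Type*} [Field K]

noncomputable def qFibPos (q x t : K) : ℕ → K
  | 0 => 0
  | 1 => 1
  | n + 2 => x * qFibPos q x t (n + 1) + q ^ n * t * qFibPos q x t n

noncomputable def qFibNeg (q x t : K) : ℕ → K
  | 0 => 0
  | 1 => q / t
  | m + 2 => (qFibNeg q x t m - x * qFibNeg q x t (m + 1)) * q ^ (m + 2) / t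

/-- The Carlitz q-Fibonacci polynomial `f(n, x, t)` for `n : ℤ`, defined by `f 0 = 0`,
`f 1 = 1` and `f n = x * f (n-1) + q^(n-2) * t * f (n-2)`, solved backwards for `n < 0`. -/
noncomputable def qFib (q x t : K) : ℤ → K
  | Int.ofNat n => qFibPos q x t n
  | Int.negSucc m => qFibNeg q x t (m + 1)

lemma qFib_zero (q x t : K) : qFib q x t 0 = 0 := rfl
lemma qFib_one (q x t : K) : qFib q x t 1 = 1 := rfl
lemma qFib_natCast (q x t : K) (n : ℕ) : qFib q x t (n : ℤ) = qFibPos q x t n := rfl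
lemma qFib_neg_one (q x t : K) : qFib q x t (-1) = q / t := rfl

lemma qFib_rec (q x t : K) (hq : q ≠ 0) (ht : t ≠ 0) (n : ℤ) :
    qFib q x t (n + 2) = x * qFib q x t (n + 1) + q ^ n * t * qFib q x t n := by
  match n with
  | Int.ofNat m =>
    have h2 : (Int.ofNat m) + 2 = ((m + 2 : ℕ) : ℤ) := by
      simp [Int.ofNat_eq_natCast]
    have h1 : (Int.ofNat m) + 1 = ((m + 1 : ℕ) : ℤ) := by
      simp [Int.ofNat_eq_natCast]
    rw [h2, h1, qFib_natCast, qFib_natCast]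
    show qFibPos q x t (m + 2) = _
    rw [qFibPos]
    rw [show (Int.ofNat m : ℤ) = (m : ℤ) from rfl, zpow_natCast]
    rfl
  | Int.negSucc 0 =>
    show qFib q x t 1 = x * qFib q x t 0 + q ^ (-1 : ℤ) * t * qFib q x t (-1)
    rw [qFib_zero, qFib_one, qFib_neg_one, zpow_neg_one]
    field_simp
    ring
  | Int.negSucc 1 =>
    show qFib q x t 0 = x * qFib q x t (-1) + q ^ (-2 : ℤ) * t * qFib q x t (-2)
    rw [qFib_zero, qFib_neg_one]
    have h2 : qFib q x t (-2) =
        (qFibNeg q x t 0 - x * qFibNeg q x t 1) * q ^ (0 + 2) / t := rfl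
    rw [h2]
    have hz : (q : K) ^ (-2 : ℤ) = (q ^ (2 : ℕ))⁻¹ := by
      rw [show (-2 : ℤ) = -(2 : ℕ) by norm_num, zpow_neg, zpow_natCast]
    rw [hz]
    show (0 : K) = x * (q / t) + (q ^ (2:ℕ))⁻¹ * t * ((0 - x * (q / t)) * q ^ (0 + 2) / t)
    have hqp : (q : K) ^ (2 : ℕ) ≠ 0 := pow_ne_zero _ hq
    field_simp
    ring
  | Int.negSucc (m + 2) =>
    have e2 : (Int.negSucc (m + 2)) + 2 = Int.negSucc m := by
      simp [Int.negSucc_eq]; ring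
    have e1 : (Int.negSucc (m + 2)) + 1 = Int.negSucc (m + 1) := by
      simp [Int.negSucc_eq]; ring
    rw [e2, e1]
    show qFibNeg q x t (m + 1) = x * qFibNeg q x t (m + 2) +
      q ^ (Int.negSucc (m + 2)) * t * qFibNeg q x t (m + 3)
    have h3 : qFibNeg q x t (m + 3) =
        (qFibNeg q x t (m + 1) - x * qFibNeg q x t (m + 2)) * q ^ (m + 1 + 2) / t := rfl
    rw [h3]
    have hz : (q : K) ^ (Int.negSucc (m + 2)) = (q ^ (m + 3 : ℕ))⁻¹ := by
      rw [Int.negSucc_eq, zpow_neg, ← zpow_natCast]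
      congr 1
    rw [hz]
    have hqp : (q : K) ^ (m + 3 : ℕ) ≠ 0 := pow_ne_zero _ hq
    have : (m + 1 + 2) = m + 3 := by ring
    rw [this]
    field_simp
    ring

lemma rec_unique (x : K) (c : ℤ → K) (hc : ∀ n, c n ≠ 0) (a b : ℤ → K)
    (ha : ∀ n, a (n + 2) = x * a (n + 1) + c n * a n)
    (hb : ∀ n, b (n + 2) = x * b (n + 1) + c n * b n)
    (m : ℤ) (h0 : a m = b m) (h1 : a (m + 1) = b (m + 1)) :
    ∀ n, a n = b n := by
  have key : ∀ n : ℤ, a n = b n ∧ a (n + 1) = b (n + 1) := by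
    intro n
    refine Int.inductionOn' n m ⟨h0, h1⟩ ?_ ?_
    · intro k _ ih
      refine ⟨ih.2, ?_⟩
      have h := ha k
      rw [ih.1, ih.2, ← hb k] at h
      rw [show k + 1 + 1 = k + 2 by ring, h]
    · intro k _ ih
      refine ⟨?_, by rw [show k - 1 + 1 = k by ring]; exact ih.1⟩
      have ha' := ha (k - 1)
      have hb' := hb (k - 1)
      rw [show k - 1 + 2 = k + 1 by ring, show k - 1 + 1 = k by ring] at ha' hb'
      have h : c (k - 1) * a (k - 1) = c (k - 1) * b (k - 1) := by
        linear_combination ih.2 - ha' + hb' - x * ih.1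
      exact mul_left_cancel₀ (hc _) h
  exact fun n => (key n).1

lemma qFib_wronskian (q x s : K) (hq : q ≠ 0) (hs : s ≠ 0) (k : ℕ) :
    qFib q x (q * s) ((k : ℤ) - 1) * qFib q x s ((k : ℤ) + 1) -
      qFib q x s (k : ℤ) * qFib q x (q * s) (k : ℤ) =
    (-1 : K) ^ k * q ^ (k.choose 2) * s ^ ((k : ℤ) - 1) := by
  have hqs : q * s ≠ 0 := mul_ne_zero hq hs
  induction k with
  | zero =>
    simp only [Nat.cast_zero, zero_sub, zero_add, qFib_neg_one, qFib_one, qFib_zero]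
    rw [zpow_neg_one]
    field_simp
    simp
  | succ k ih =>
    have hF : qFib q x s ((k:ℤ) + 2) =
        x * qFib q x s ((k:ℤ) + 1) + q ^ (k:ℤ) * s * qFib q x s (k:ℤ) :=
      qFib_rec q x s hq hs (k : ℤ)
    have hG : qFib q x (q * s) ((k:ℤ) + 1) =
        x * qFib q x (q * s) (k:ℤ) + q ^ ((k:ℤ) - 1) * (q * s) * qFib q x (q * s) ((k:ℤ) - 1) := by
      have h := qFib_rec q x (q * s) hq hqs ((k:ℤ) - 1)
      rw [show (k:ℤ) - 1 + 2 = (k:ℤ) + 1 by ring, show (k:ℤ) - 1 + 1 = (k:ℤ) by ring] at h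
      exact h
    have hc : q ^ ((k:ℤ) - 1) * (q * s) = q ^ (k:ℤ) * s := by
      rw [← mul_assoc, ← zpow_add_one₀ hq, show (k:ℤ) - 1 + 1 = (k:ℤ) by ring]
    rw [hc] at hG
    have e1 : ((k + 1 : ℕ) : ℤ) - 1 = (k : ℤ) := by push_cast; ring
    have e2 : ((k + 1 : ℕ) : ℤ) + 1 = (k : ℤ) + 2 := by push_cast; ring
    have e3 : ((k + 1 : ℕ) : ℤ) = (k : ℤ) + 1 := by push_cast; ring
    rw [e1, e2, e3, hF, hG]
    have hch : (k + 1).choose 2 = k.choose 2 + k := by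
      rw [Nat.choose_succ_succ, Nat.choose_one_right]; ring
    rw [hch]
    have hsk : s ^ (k:ℤ) = s * s ^ ((k:ℤ) - 1) := by
      rw [mul_comm, ← zpow_add_one₀ hs, sub_add_cancel]
    rw [hsk]
    have hqk : q ^ (k:ℤ) = q ^ (k:ℕ) := zpow_natCast q k
    rw [hqk]
    rw [pow_add, pow_succ]
    linear_combination (-(q ^ (k:ℕ) * s)) * ih

theorem qFib_shift_representation (q x s : K) (hq : q ≠ 0) (hs : s ≠ 0) (k : ℕ) (n : ℤ) :
    qFib q x (q ^ k * s) (n - k) =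
      (qFib q x (q * s) ((k : ℤ) - 1) * qFib q x s n -
        qFib q x s (k : ℤ) * qFib q x (q * s) (n - 1)) /
      ((-1 : K) ^ k * q ^ (k.choose 2) * s ^ ((k : ℤ) - 1)) := by
  have hqs : q * s ≠ 0 := mul_ne_zero hq hs
  have hqks : q ^ k * s ≠ 0 := mul_ne_zero (pow_ne_zero _ hq) hs
  set v : K := (-1 : K) ^ k * q ^ (k.choose 2) * s ^ ((k : ℤ) - 1) with hv
  have hvne : v ≠ 0 := by
    refine mul_ne_zero (mul_ne_zero ?_ ?_) ?_
    · exact pow_ne_zero _ (neg_ne_zero.mpr one_ne_zero)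
    · exact pow_ne_zero _ hq
    · exact zpow_ne_zero _ hs
  refine rec_unique x (fun m => q ^ m * s)
    (fun m => mul_ne_zero (zpow_ne_zero _ hq) hs)
    (fun m => qFib q x (q ^ k * s) (m - k))
    (fun m => (qFib q x (q * s) ((k : ℤ) - 1) * qFib q x s m -
        qFib q x s (k : ℤ) * qFib q x (q * s) (m - 1)) / v)
    ?_ ?_ (k : ℤ) ?_ ?_ n
  · intro m
    have h := qFib_rec q x (q ^ k * s) hq hqks (m - k)
    rw [show m - (k:ℤ) + 2 = m + 2 - k by ring, show m - (k:ℤ) + 1 = m + 1 - k by ring] at h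
    show qFib q x (q ^ k * s) (m + 2 - k) = _
    rw [h]
    have hc : q ^ (m - (k:ℤ)) * (q ^ k * s) = q ^ m * s := by
      rw [← zpow_natCast q k, ← mul_assoc, ← zpow_add₀ hq, show m - (k:ℤ) + k = m by ring]
    rw [hc]
  · intro m
    have hF := qFib_rec q x s hq hs m
    have hG := qFib_rec q x (q * s) hq hqs (m - 1)
    rw [show m - 1 + 2 = m + 1 by ring, show m - 1 + 1 = m by ring] at hG
    have hc : q ^ (m - 1 : ℤ) * (q * s) = q ^ m * s := by
      rw [← mul_assoc, ← zpow_add_one₀ hq, show m - (1:ℤ) + 1 = m by ring]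
    rw [hc] at hG
    show _ / v = x * (_ / v) + q ^ m * s * (_ / v)
    rw [show m + 2 - 1 = m + 1 by ring, show m + 1 - 1 = m by ring, hF, hG]
    field_simp
    ring
  · show qFib q x (q ^ k * s) ((k:ℤ) - k) = _ / v
    rw [sub_self, qFib_zero]
    rw [mul_comm (qFib q x s (k:ℤ)) (qFib q x (q * s) ((k:ℤ) - 1)), sub_self, zero_div]
  · show qFib q x (q ^ k * s) ((k:ℤ) + 1 - k) = _ / v
    rw [show (k:ℤ) + 1 - k = 1 by ring, qFib_one, show (k:ℤ) + 1 - 1 = (k:ℤ) by ring]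
    rw [qFib_wronskian q x s hq hs k, ← hv, div_self hvne]
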